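/- Let (P, W, c) be a witness Gabriel drawing of the complete 4-partite graph K_{2,2,2,2}, i.e., c : P → Fin 4 with every color class of size exactly 2 (so |P| = 8), with P ∪ W in general position. Then no witness lies in the interior of the convex hull of P: W ∩ interior(convexHull P) = ∅. -/

import Mathlib

open scoped RealInnerProductSpace

noncomputable section

/-- The Euclidean plane. -/
abbrev Pt := EuclideanSpace ℝ (Fin 2)

/-- The closed disk with diameter `ab`. -/
def diskD (a b : Pt) : Set Pt := Metric.closedBall (midpoint ℝ a b) (dist a b / 2)

/-- `a` and `b` are adjacent in the witness Gabriel graph with witness set `W`. -/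
def gabrielEdge (W : Set Pt) (a b : Pt) : Prop := (diskD a b \ {a, b}) ∩ W = ∅

/-- General position: no three points collinear, no four points concyclic. -/
def GenPos (S : Set Pt) : Prop :=
  (∀ a ∈ S, ∀ b ∈ S, ∀ c ∈ S, a ≠ b → a ≠ c → b ≠ c → ¬ Collinear ℝ ({a, b, c} : Set Pt)) ∧
  (∀ a ∈ S, ∀ b ∈ S, ∀ c ∈ S, ∀ d ∈ S, a ≠ b → a ≠ c → a ≠ d → b ≠ c → b ≠ d → c ≠ d →
    ¬ EuclideanGeometry.Cospherical ({a, b, c, d} : Set Pt))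

/-- Planar determinant `u₁v₂ − u₂v₁`. -/
def det2 (u v : Pt) : ℝ := u 0 * v 1 - u 1 * v 0

/-- Counterclockwise convex position. -/
def CCWConvexPos {m : ℕ} (q : Fin m → Pt) : Prop :=
  ∀ i j k : Fin m, i < j → j < k → 0 < det2 (q j - q i) (q k - q i)

/-- Cyclic successor in `Fin m`. -/
def cyclicSucc {m : ℕ} (hm : 0 < m) (i : Fin m) : Fin m :=
  ⟨((i : ℕ) + 1) % m, Nat.mod_lt _ hm⟩

/-- Key planar fact: two pairs of vectors cannot each make an obtuse angle while all
four cross pairs make acute angles. -/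
lemma key2d (u1 u2 v1 v2 x1 x2 y1 y2 : ℝ)
    (hE : u1*v1+u2*v2 < 0) (hF : x1*y1+x2*y2 < 0)
    (hA : 0 < u1*x1+u2*x2) (hB : 0 < v1*x1+v2*x2)
    (hC : 0 < u1*y1+u2*y2) (hD : 0 < v1*y1+v2*y2) : False := by
  have hβ : 0 < v1^2 + v2^2 := by
    by_contra h
    push_neg at h
    have h1 : v1 = 0 := by nlinarith [sq_nonneg v1, sq_nonneg v2]
    have h2 : v2 = 0 := by nlinarith [sq_nonneg v1, sq_nonneg v2]
    rw [h1, h2] at hB; linarith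
  have hα : 0 < u1^2 + u2^2 := by
    by_contra h
    push_neg at h
    have h1 : u1 = 0 := by nlinarith [sq_nonneg u1, sq_nonneg u2]
    have h2 : u2 = 0 := by nlinarith [sq_nonneg u1, sq_nonneg u2]
    rw [h1, h2] at hA; linarith
  have hid : (u1*v2-u2*v1)^2 * (x1*y1+x2*y2)
      = (u1*x1+u2*x2)*(u1*y1+u2*y2)*(v1^2+v2^2)
      + (v1*x1+v2*x2)*(v1*y1+v2*y2)*(u1^2+u2^2)
      - (u1*v1+u2*v2)*((u1*x1+u2*x2)*(v1*y1+v2*y2) + (v1*x1+v2*x2)*(u1*y1+u2*y2)) := by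
    ring
  nlinarith [hid, mul_pos (mul_pos hA hC) hβ, mul_pos (mul_pos hB hD) hα,
    mul_pos (neg_pos.mpr hE) (add_pos (mul_pos hA hD) (mul_pos hB hC)),
    mul_nonneg (sq_nonneg (u1*v2-u2*v1)) (le_of_lt (neg_pos.mpr hF))]

lemma norm_add_le_iff_inner_nonpos (x y : Pt) : ‖x + y‖ ≤ ‖y - x‖ ↔ ⟪x, y⟫ ≤ 0 := by
  rw [← pow_le_pow_iff_left₀ (norm_nonneg _) (norm_nonneg _) (two_ne_zero)]
  rw [norm_add_sq_real, norm_sub_sq_real]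
  constructor <;> intro h <;> nlinarith [real_inner_comm x y]

lemma mem_diskD_iff (a b w : Pt) : w ∈ diskD a b ↔ ⟪w - a, w - b⟫ ≤ 0 := by
  have h1 : w - midpoint ℝ a b = (2⁻¹ : ℝ) • ((w - a) + (w - b)) := by
    rw [midpoint_eq_smul_add, invOf_eq_inv]
    module
  have h2 : dist w (midpoint ℝ a b) = ‖(w - a) + (w - b)‖ / 2 := by
    rw [dist_eq_norm, h1, norm_smul]
    simp; ring
  have h3 : dist a b = ‖(w - b) - (w - a)‖ := by
    rw [dist_eq_norm]
    congr 1
    abel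
  rw [diskD, Metric.mem_closedBall, h2, h3,
    div_le_div_iff_of_pos_right (by norm_num : (0:ℝ) < 2)]
  exact norm_add_le_iff_inner_nonpos _ _

lemma exists_neg_inner (P : Finset Pt) (w : Pt)
    (hw : w ∈ interior (convexHull ℝ (P : Set Pt))) (u : Pt) (hu : u ≠ 0) :
    ∃ p ∈ P, ⟪p - w, u⟫ < 0 := by
  by_contra h
  push_neg at h
  have hconv : Convex ℝ {x : Pt | ⟪u, w⟫ ≤ ⟪u, x⟫} :=
    convex_halfSpace_ge
      ⟨fun x y => inner_add_right u x y, fun r x => real_inner_smul_right u x r⟩ _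
  have hS : convexHull ℝ (P : Set Pt) ⊆ {x : Pt | ⟪u, w⟫ ≤ ⟪u, x⟫} := by
    apply convexHull_min _ hconv
    intro p hp
    have h1 := h p hp
    have h2 : ⟪p - w, u⟫ = ⟪u, p⟫ - ⟪u, w⟫ := by
      rw [real_inner_comm, inner_sub_right]
    simp only [Set.mem_setOf_eq]
    linarith [h2 ▸ h1]
  obtain ⟨ε, hε, hball⟩ := Metric.isOpen_iff.mp isOpen_interior w hw
  have hun : 0 < ‖u‖ := norm_pos_iff.mpr hu
  set z : Pt := w - (ε / 2 / ‖u‖) • u with hz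
  have hzball : z ∈ Metric.ball w ε := by
    rw [Metric.mem_ball, dist_eq_norm, hz]
    have he : w - (ε / 2 / ‖u‖) • u - w = -((ε / 2 / ‖u‖) • u) := by abel
    rw [he, norm_neg, norm_smul, Real.norm_eq_abs, abs_of_pos (by positivity),
      div_mul_cancel₀ _ (ne_of_gt hun)]
    linarith
  have hzS := hS (interior_subset (hball hzball))
  simp only [Set.mem_setOf_eq, hz, inner_sub_right, real_inner_smul_right,
    real_inner_self_eq_norm_sq] at hzS
  have : 0 < ε / 2 / ‖u‖ * ‖u‖ ^ 2 := by positivity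
  linarith

lemma inner_expand (x y : Pt) : ⟪x, y⟫ = x 0 * y 0 + x 1 * y 1 := by
  rw [PiLp.inner_apply]
  simp [Fin.sum_univ_two, RCLike.inner_apply]
  ring

/-- In a witness Gabriel drawing of `K_{2,2,2,2}`, no witness lies in the
interior of the convex hull of the vertices. -/
theorem K2222_no_witness_inside_hull
    (P W : Finset Pt) (c : Pt → Fin 4)
    (hcard : P.card = 8)
    (hsize : ∀ i : Fin 4, (P.filter (fun p => c p = i)).card = 2)
    (hgp : GenPos ((P : Set Pt) ∪ (W : Set Pt)))
    (hdraw : ∀ a ∈ P, ∀ b ∈ P, a ≠ b →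
      (gabrielEdge (W : Set Pt) a b ↔ c a ≠ c b)) :
    (W : Set Pt) ∩ interior (convexHull ℝ (P : Set Pt)) = ∅ := by
  classical
  rw [Set.eq_empty_iff_forall_notMem]
  rintro w ⟨hwW, hwI⟩
  -- choose two colors different from the color of w
  obtain ⟨i, j, hij, hiw, hjw⟩ :=
    (show ∀ k : Fin 4, ∃ i j : Fin 4, i ≠ j ∧ i ≠ k ∧ j ≠ k by decide) (c w)
  obtain ⟨a, a', haa', hai⟩ := Finset.card_eq_two.mp (hsize i)
  obtain ⟨b, b', hbb', hbj⟩ := Finset.card_eq_two.mp (hsize j)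
  have hmem : ∀ x x' : Pt, ∀ k : Fin 4, P.filter (fun p => c p = k) = {x, x'} →
      x ∈ P ∧ c x = k ∧ x' ∈ P ∧ c x' = k := by
    intro x x' k hf
    have h1 : x ∈ P.filter (fun p => c p = k) := by rw [hf]; simp
    have h2 : x' ∈ P.filter (fun p => c p = k) := by rw [hf]; simp
    rw [Finset.mem_filter] at h1 h2
    exact ⟨h1.1, h1.2, h2.1, h2.2⟩
  obtain ⟨haP, hac, ha'P, ha'c⟩ := hmem a a' i hai
  obtain ⟨hbP, hbc, hb'P, hb'c⟩ := hmem b b' j hbj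
  have hnw : ∀ x : Pt, c x ≠ c w → x ≠ w := fun x hx h => hx (h ▸ rfl)
  have haw : a ≠ w := hnw a (hac ▸ hiw)
  have ha'w : a' ≠ w := hnw a' (ha'c ▸ hiw)
  have hbw : b ≠ w := hnw b (hbc ▸ hjw)
  have hb'w : b' ≠ w := hnw b' (hb'c ▸ hjw)
  -- crossing pairs of different colors: w is strictly outside the diameter disk
  have cross : ∀ p ∈ P, ∀ q ∈ P, c p ≠ c q → p ≠ w → q ≠ w → 0 < ⟪w - p, w - q⟫ := by
    intro p hp q hq hc hpw hqw
    have hpq : p ≠ q := fun h => hc (h ▸ rfl)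
    have hedge : gabrielEdge (W : Set Pt) p q := (hdraw p hp q hq hpq).mpr hc
    by_contra h
    push_neg at h
    have hwd : w ∈ diskD p q := (mem_diskD_iff p q w).mpr h
    have hwmem : w ∈ (diskD p q \ {p, q}) ∩ (W : Set Pt) := by
      refine ⟨⟨hwd, ?_⟩, hwW⟩
      simp only [Set.mem_insert_iff, Set.mem_singleton_iff]
      push_neg
      exact ⟨fun h => hpw h.symm, fun h => hqw h.symm⟩
    rw [gabrielEdge] at hedge
    rw [hedge] at hwmem
    exact hwmem
  -- each point has its same-color mate strictly "opposite" across w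
  have mate : ∀ x x' : Pt, ∀ k : Fin 4, P.filter (fun p => c p = k) = {x, x'} →
      x ∈ P → c x = k → x ≠ w → k ≠ c w → ⟪w - x, w - x'⟫ < 0 := by
    intro x x' k hf hxP hxc hxw hkw
    obtain ⟨q, hqP, hq⟩ := exists_neg_inner P w hwI (x - w) (sub_ne_zero.mpr hxw)
    have hinner : ⟪w - x, w - q⟫ < 0 := by
      have : ⟪w - x, w - q⟫ = ⟪q - w, x - w⟫ := by
        rw [show w - x = -(x - w) by abel, show w - q = -(q - w) by abel,
          inner_neg_neg, real_inner_comm]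
      rw [this]; exact hq
    have hqw : q ≠ w := by
      intro h
      rw [h] at hinner
      simp at hinner
    have hqx : q ≠ x := by
      intro h
      rw [h] at hinner
      exact absurd (real_inner_self_nonneg (x := w - x)) (not_le.mpr hinner)
    have hqc : c q = k := by
      by_contra hne
      have : c x ≠ c q := by rw [hxc]; exact fun h => hne h.symm
      exact absurd hinner (not_lt.mpr (le_of_lt (cross x hxP q hqP this hxw hqw)))
    have : q ∈ ({x, x'} : Finset Pt) := hf ▸ Finset.mem_filter.mpr ⟨hqP, hqc⟩
    rw [Finset.mem_insert, Finset.mem_singleton] at this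
    rcases this with h | h
    · exact absurd h hqx
    · rw [← h]; exact hinner
  have e1 : ⟪w - a, w - a'⟫ < 0 := mate a a' i hai haP hac haw hiw
  have e2 : ⟪w - b, w - b'⟫ < 0 := mate b b' j hbj hbP hbc hbw hjw
  have hcab : c a ≠ c b := by rw [hac, hbc]; exact hij
  have hcab' : c a ≠ c b' := by rw [hac, hb'c]; exact hij
  have hca'b : c a' ≠ c b := by rw [ha'c, hbc]; exact hij
  have hca'b' : c a' ≠ c b' := by rw [ha'c, hb'c]; exact hij
  have f1 := cross a haP b hbP hcab haw hbw
  have f2 := cross a haP b' hb'P hcab' haw hb'w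
  have f3 := cross a' ha'P b hbP hca'b ha'w hbw
  have f4 := cross a' ha'P b' hb'P hca'b' ha'w hb'w
  rw [inner_expand] at e1 e2 f1 f2 f3 f4
  exact key2d ((w - a) 0) ((w - a) 1) ((w - a') 0) ((w - a') 1)
    ((w - b) 0) ((w - b) 1) ((w - b') 0) ((w - b') 1)
    e1 e2 f1 f3 f2 f4
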